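/- Let n ∈ ℕ, m_1, …, m_n ≥ 0 with ∑ m_i = 1, x_1, …, x_n ∈ Ω, and set ρ := ∑_{i=1}^n m_i δ_{x_i}. Then for every κ ∈ (0,∞), J_{ρ,κ} admits a minimizer over M₊(Ω) of the form ν = ∑_{i=1}^k m̃_i δ_{x̃_i} for some positive integer k ≤ n, nonnegative masses m̃_1, …, m̃_k and points x̃_1, …, x̃_k ∈ Ω. -/

import Mathlib

open scoped Classical
open MeasureTheory ENNReal Filter Topology Real
open scoped NNReal

noncomputable section

/-- The entropy function `φ` with `φ(s) = s log s - s + 1` for `s > 0`, `φ(0) = 1`. -/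
def phiEnt (s : ℝ≥0∞) : ℝ≥0∞ :=
  if s = 0 then 1 else if s = ⊤ then ⊤
  else ENNReal.ofReal (s.toReal * Real.log s.toReal - s.toReal + 1)

/-- Kullback–Leibler divergence of `σ` with respect to `μ`. -/
def KLdiv {X : Type*} [MeasurableSpace X] (σ μ : Measure X) : ℝ≥0∞ :=
  if σ ≪ μ then ∫⁻ x, phiEnt (σ.rnDeriv μ x) ∂μ else ⊤

/-- The cost `ĉ_κ(x,y) = -2 log cos(d(x,y)/κ)` for `d(x,y) ≤ κπ/2`, `∞` otherwise. -/
def hkCost {X : Type*} [PseudoMetricSpace X] (κ : ℝ) (x y : X) : ℝ≥0∞ :=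
  if dist x y < κ * π / 2 then ENNReal.ofReal (-2 * Real.log (Real.cos (dist x y / κ))) else ⊤

/-- Squared Hellinger–Kantorovich distance with length scale `κ`. -/
def HK2 {X : Type*} [MeasurableSpace X] [PseudoMetricSpace X] (κ : ℝ) (μ ν : Measure X) : ℝ≥0∞ :=
  ⨅ (γ : Measure (X × X)) (_ : IsFiniteMeasure γ),
    (∫⁻ p, hkCost κ p.1 p.2 ∂γ) + KLdiv (γ.map Prod.fst) μ + KLdiv (γ.map Prod.snd) ν

abbrev Ed (d : ℕ) : Type := EuclideanSpace ℝ (Fin d)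

/-- Truncated cosine `Cos(s) = cos(min(|s|, π/2))`. -/
def tcos (s : ℝ) : ℝ := Real.cos (min |s| (π / 2))

/-- Squared Hellinger distance. -/
def Hell2 {X : Type*} [MeasurableSpace X] (μ ν : Measure X) : ℝ≥0∞ :=
  ∫⁻ x, ENNReal.ofReal ((Real.sqrt ((μ.rnDeriv (μ + ν)) x).toReal
      - Real.sqrt ((ν.rnDeriv (μ + ν)) x).toReal) ^ 2) ∂(μ + ν)

/-- Squared Wasserstein-2 distance (value `∞` when no coupling exists). -/
def W2 {X : Type*} [MeasurableSpace X] [PseudoMetricSpace X] (μ ν : Measure X) : ℝ≥0∞ :=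
  ⨅ (γ : Measure (X × X)) (_ : γ.map Prod.fst = μ) (_ : γ.map Prod.snd = ν),
    ∫⁻ p, ENNReal.ofReal (dist p.1 p.2 ^ 2) ∂γ

/-- Borel σ-algebra on the space of finite measures with the weak* topology. -/
instance (X : Type*) [TopologicalSpace X] [MeasurableSpace X] [OpensMeasurableSpace X] :
    MeasurableSpace (FiniteMeasure X) := borel _

instance (X : Type*) [TopologicalSpace X] [MeasurableSpace X] [OpensMeasurableSpace X] :
    BorelSpace (FiniteMeasure X) := ⟨rfl⟩

/-- The set `𝔠` of nonnegative measures of total mass at most `M`. -/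
def cSet (X : Type*) [TopologicalSpace X] [MeasurableSpace X] [OpensMeasurableSpace X]
    (M : ℝ≥0) : Set (FiniteMeasure X) := {μ | μ.mass ≤ M}

/-- The barycenter functional `J_{Λ,κ}`. -/
def JCont {X : Type*} [MeasurableSpace X] [PseudoMetricSpace X] [OpensMeasurableSpace X]
    {M : ℝ≥0} (Λ : Measure (cSet X M)) (κ : ℝ) (ν : Measure X) : ℝ≥0∞ :=
  ∫⁻ μ : cSet X M, HK2 κ ((μ : FiniteMeasure X) : Measure X) ν ∂Λ

/-- Barycenter functional for the limit scales `κ∞ = 0` (Hellinger) and `κ∞ = ∞` (Wasserstein). -/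
def JContGen {X : Type*} [MeasurableSpace X] [PseudoMetricSpace X] [OpensMeasurableSpace X]
    {M : ℝ≥0} (Λ : Measure (cSet X M)) (κinf : ℝ≥0∞) (ν : Measure X) : ℝ≥0∞ :=
  if κinf = 0 then ∫⁻ μ : cSet X M, Hell2 ((μ : FiniteMeasure X) : Measure X) ν ∂Λ
  else if κinf = ⊤ then ∫⁻ μ : cSet X M, W2 ((μ : FiniteMeasure X) : Measure X) ν ∂Λ
  else ∫⁻ μ : cSet X M, HK2 κinf.toReal ((μ : FiniteMeasure X) : Measure X) ν ∂Λ

/-- The barycenter functional `J_{ρ,κ}` for Dirac input measures distributed as `ρ`. -/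
def JDirac {X : Type*} [MeasurableSpace X] [PseudoMetricSpace X]
    (ρ : Measure X) (κ : ℝ) (ν : Measure X) : ℝ≥0∞ :=
  ∫⁻ x, HK2 κ (Measure.dirac x) ν ∂ρ

/-- The dual constraint function `F_{ρ,κ}(ψ)`. -/
def Fcon {X : Type*} [MeasurableSpace X] [PseudoMetricSpace X]
    (ρ : Measure X) (κ : ℝ) (ψ : X → ℝ) (y : X) : ℝ :=
  ∫ x, tcos (dist x y / κ) ^ 2 / (1 - ψ x) ∂ρ

/-- Admissibility for the dual problem `(D_{ρ,κ})`. -/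
def DualAdm {X : Type*} [MeasurableSpace X] [PseudoMetricSpace X]
    (ρ : Measure X) (κ : ℝ) (ψ : X → ℝ) : Prop :=
  Continuous ψ ∧ (∀ x, ψ x < 1) ∧ ∀ y, Fcon ρ κ ψ y ≤ 1

/-- Optimality for the dual problem `(D_{ρ,κ})`. -/
def DualOpt {X : Type*} [MeasurableSpace X] [PseudoMetricSpace X]
    (ρ : Measure X) (κ : ℝ) (ψ : X → ℝ) : Prop :=
  DualAdm ρ κ ψ ∧ ∀ ψ' : X → ℝ, DualAdm ρ κ ψ' → ∫ x, ψ' x ∂ρ ≤ ∫ x, ψ x ∂ρ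

/-- `ν` minimizes `J_{ρ,κ}` over the nonnegative finite measures. -/
def PrimalMin {X : Type*} [MeasurableSpace X] [PseudoMetricSpace X]
    (ρ : Measure X) (κ : ℝ) (ν : Measure X) : Prop :=
  IsFiniteMeasure ν ∧ ∀ ν' : Measure X, IsFiniteMeasure ν' → JDirac ρ κ ν ≤ JDirac ρ κ ν'

/-- Support of a measure. -/
def msupport {X : Type*} [TopologicalSpace X] [MeasurableSpace X] (μ : Measure X) : Set X :=
  {x | ∀ U ∈ nhds x, 0 < μ U}

/-- A measure is discrete if it is a countable sum of weighted Dirac measures. -/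
def IsDiscreteMeas {X : Type*} [MeasurableSpace X] (μ : Measure X) : Prop :=
  ∃ (x : ℕ → X) (c : ℕ → ℝ≥0∞), μ = Measure.sum fun n => c n • Measure.dirac (x n)

/-- The dual constraint set `Q_κ`. -/
def QSet (X : Type*) [PseudoMetricSpace X] (κ : ℝ) : Set ((X → ℝ) × (X → ℝ)) :=
  {p | Continuous p.1 ∧ Continuous p.2 ∧ (∀ x, p.1 x ≤ 1) ∧ (∀ y, p.2 y ≤ 1) ∧
    ∀ x y, tcos (dist x y / κ) ^ 2 ≤ (1 - p.1 x) * (1 - p.2 y)}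

set_option linter.unusedSectionVars false
set_option linter.unnecessarySimpa false

section HKAux
lemma hk_xlog (x y : ℝ) (hx : 0 ≤ x) (hy : 0 < y) : x - y ≤ x * Real.log (x / y) := by
  rcases eq_or_lt_of_le hx with h | h
  · simp [← h]; linarith
  · have h1 : Real.log (y / x) ≤ y / x - 1 := Real.log_le_sub_one_of_pos (by positivity)
    have h2 : Real.log (x / y) = - Real.log (y / x) := by
      rw [← Real.log_inv]; congr 1; field_simp
    have h3 : x * Real.log (y / x) ≤ x * (y / x - 1) :=
      mul_le_mul_of_nonneg_left h1 h.le
    have h4 : x * (y / x - 1) = y - x := by field_simp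
    rw [h2]; nlinarith

def phiR (s : ℝ) : ℝ := s * Real.log s - s + 1

lemma phiR_zero : phiR 0 = 1 := by simp [phiR]

lemma phiR_nonneg {s : ℝ} (hs : 0 ≤ s) : 0 ≤ phiR s := by
  have h := hk_xlog s 1 hs one_pos
  simp only [div_one] at h
  unfold phiR; linarith

lemma phiR_tangent (s α : ℝ) (hs : 0 ≤ s) : α * s + 1 ≤ phiR s + Real.exp α := by
  rcases eq_or_lt_of_le hs with h | h
  · simp [← h, phiR_zero]; positivity
  · have h1 := hk_xlog s (Real.exp α) hs (Real.exp_pos α)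
    rw [Real.log_div h.ne' (Real.exp_ne_zero α), Real.log_exp] at h1
    unfold phiR; nlinarith

lemma hk_master_real (ρ Cv α : ℝ) (hρ : 0 ≤ ρ) (hC : 0 < Cv) :
    1 ≤ (-Real.log Cv) * ρ + phiR ρ + α * ρ + Cv * Real.exp (-α) := by
  rcases eq_or_lt_of_le hρ with h | h
  · simp [← h, phiR_zero]; positivity
  · have h1 := hk_xlog ρ (Cv * Real.exp (-α)) hρ (by positivity)
    rw [Real.log_div h.ne' (by positivity), Real.log_mul hC.ne' (Real.exp_ne_zero _),
      Real.log_exp] at h1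
    unfold phiR; nlinarith

lemma max_sub_max_neg (α : ℝ) : max α 0 - max (-α) 0 = α := by
  rcases le_total α 0 with h | h
  · rw [max_eq_right h, max_eq_left (by linarith)]; ring
  · rw [max_eq_left h, max_eq_right (by linarith)]; ring

lemma phiEnt_eq_ofReal {r : ℝ≥0∞} (hr : r ≠ ⊤) : phiEnt r = ENNReal.ofReal (phiR r.toReal) := by
  rcases eq_or_ne r 0 with h | h
  · subst h; simp [phiEnt, phiR]
  · rw [phiEnt, if_neg h, if_neg hr]; rfl

lemma phiEnt_top : phiEnt ⊤ = ⊤ := by simp [phiEnt]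

lemma phiEnt_zero : phiEnt 0 = 1 := by simp [phiEnt]

lemma measurable_phiEnt : Measurable phiEnt := by
  unfold phiEnt
  refine Measurable.ite measurableSet_eq measurable_const ?_
  refine Measurable.ite measurableSet_eq measurable_const ?_
  exact (ENNReal.measurable_ofReal.comp
    (((ENNReal.measurable_toReal.mul
      (Real.measurable_log.comp ENNReal.measurable_toReal)).sub
        ENNReal.measurable_toReal).add measurable_const))

section Cf
variable {X : Type*} [PseudoMetricSpace X]

def CfR (κ : ℝ) (x y : X) : ℝ := tcos (dist x y / κ) ^ 2

lemma tcos_mem (s : ℝ) : tcos s ∈ Set.Icc (0:ℝ) 1 := by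
  constructor
  · apply Real.cos_nonneg_of_mem_Icc
    constructor
    · have : (0:ℝ) ≤ min |s| (π/2) := le_min (abs_nonneg s) (by positivity)
      linarith [Real.pi_pos]
    · exact min_le_right _ _
  · exact Real.cos_le_one _

lemma CfR_nonneg (κ : ℝ) (x y : X) : 0 ≤ CfR κ x y := sq_nonneg _

lemma CfR_le_one (κ : ℝ) (x y : X) : CfR κ x y ≤ 1 := by
  have h := tcos_mem (dist x y / κ)
  unfold CfR
  nlinarith [h.1, h.2]

lemma CfR_self (κ : ℝ) (x : X) : CfR κ x x = 1 := by
  unfold CfR tcos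
  simp [Real.pi_pos.le, min_eq_left, abs_of_nonneg, le_of_lt Real.pi_div_two_pos]

lemma hkCost_cases (κ : ℝ) (hκ : 0 < κ) (x y : X) :
    (hkCost κ x y = ENNReal.ofReal (- Real.log (CfR κ x y)) ∧ 0 < CfR κ x y)
    ∨ (hkCost κ x y = ⊤ ∧ CfR κ x y = 0) := by
  have hd0 : 0 ≤ dist x y / κ := div_nonneg dist_nonneg hκ.le
  by_cases h : dist x y < κ * π / 2
  · left
    have hlt : dist x y / κ < π / 2 := by
      rw [div_lt_iff₀ hκ]; nlinarith
    have habs : |dist x y / κ| = dist x y / κ := abs_of_nonneg hd0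
    have hmin : min |dist x y / κ| (π / 2) = dist x y / κ := by
      rw [habs]; exact min_eq_left hlt.le
    have hcos : 0 < Real.cos (dist x y / κ) := by
      apply Real.cos_pos_of_mem_Ioo
      constructor <;> [linarith; exact hlt]
    have hC : CfR κ x y = Real.cos (dist x y / κ) ^ 2 := by
      unfold CfR tcos; rw [hmin]
    constructor
    · rw [hkCost, if_pos h, hC, Real.log_pow]
      norm_num
    · rw [hC]; positivity
  · right
    have hge : π / 2 ≤ dist x y / κ := by
      rw [le_div_iff₀ hκ]; nlinarith [not_lt.mp h]
    have habs : |dist x y / κ| = dist x y / κ := abs_of_nonneg hd0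
    have hmin : min |dist x y / κ| (π / 2) = π / 2 := by
      rw [habs]; exact min_eq_right hge
    constructor
    · rw [hkCost, if_neg h]
    · unfold CfR tcos; rw [hmin, Real.cos_pi_div_two]; norm_num

lemma pointwise_P (κ : ℝ) (hκ : 0 < κ) (x y : X) (r : ℝ≥0∞) (α : ℝ) :
    1 + ENNReal.ofReal (max (-α) 0) * r ≤
      hkCost κ x y * r + phiEnt r + ENNReal.ofReal (max α 0) * r
        + ENNReal.ofReal (CfR κ x y * Real.exp (-α)) := by
  rcases hkCost_cases κ hκ x y with ⟨hc, hCpos⟩ | ⟨hc, hC0⟩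
  · rcases eq_or_ne r ⊤ with hr | hr
    · rw [hr, phiEnt_top]
      simp [add_comm, ENNReal.add_eq_top]
    · -- finite r
      set ρ := r.toReal with hρdef
      have hρ : 0 ≤ ρ := ENNReal.toReal_nonneg
      have hrr : r = ENNReal.ofReal ρ := (ENNReal.ofReal_toReal hr).symm
      have hlog : 0 ≤ - Real.log (CfR κ x y) := by
        have := Real.log_nonpos (CfR_nonneg κ x y) (CfR_le_one κ x y)
        linarith
      rw [hc, phiEnt_eq_ofReal hr, hrr, ENNReal.toReal_ofReal hρ]
      rw [← ENNReal.ofReal_mul hlog, ← ENNReal.ofReal_mul (le_max_right α 0),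
        ← ENNReal.ofReal_mul (le_max_right (-α) 0)]
      calc (1:ℝ≥0∞) + ENNReal.ofReal (max (-α) 0 * ρ)
          = ENNReal.ofReal (1 + max (-α) 0 * ρ) := by
            rw [ENNReal.ofReal_add (by norm_num) (by positivity), ENNReal.ofReal_one]
        _ ≤ ENNReal.ofReal ((-Real.log (CfR κ x y) * ρ) + phiR ρ + (max α 0 * ρ)
              + (CfR κ x y * Real.exp (-α))) := by
            apply ENNReal.ofReal_le_ofReal
            nlinarith [hk_master_real ρ (CfR κ x y) α hρ hCpos, max_sub_max_neg α]
        _ ≤ _ :=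
            le_trans ENNReal.ofReal_add_le (add_le_add (le_trans ENNReal.ofReal_add_le
              (add_le_add ENNReal.ofReal_add_le le_rfl)) le_rfl)
  · rcases eq_or_ne r 0 with hr | hr
    · rw [hr, phiEnt_zero]
      simp
    · rw [hc, ENNReal.top_mul hr]
      simp
lemma pointwise_Q (s : ℝ≥0∞) (hs : s ≠ ⊤) (α : ℝ) :
    1 + ENNReal.ofReal (max α 0) * s ≤
      phiEnt s + ENNReal.ofReal (Real.exp α) + ENNReal.ofReal (max (-α) 0) * s := by
  set S := s.toReal with hSdef
  have hS : 0 ≤ S := ENNReal.toReal_nonneg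
  have hss : s = ENNReal.ofReal S := (ENNReal.ofReal_toReal hs).symm
  rw [phiEnt_eq_ofReal hs, hss, ENNReal.toReal_ofReal hS]
  rw [← ENNReal.ofReal_mul (le_max_right α 0), ← ENNReal.ofReal_mul (le_max_right (-α) 0)]
  calc (1:ℝ≥0∞) + ENNReal.ofReal (max α 0 * S)
      = ENNReal.ofReal (1 + max α 0 * S) := by
        rw [ENNReal.ofReal_add (by norm_num) (by positivity), ENNReal.ofReal_one]
    _ ≤ ENNReal.ofReal (phiR S + Real.exp α + (max (-α) 0 * S)) := by
        apply ENNReal.ofReal_le_ofReal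
        nlinarith [phiR_tangent S α hS, max_sub_max_neg α]
    _ ≤ _ :=
        le_trans ENNReal.ofReal_add_le (add_le_add ENNReal.ofReal_add_le le_rfl)


variable [MeasurableSpace X] [OpensMeasurableSpace X] [SecondCountableTopology X]

lemma continuous_tcos : Continuous tcos :=
  Real.continuous_cos.comp (continuous_abs.min continuous_const)

lemma continuous_CfR (κ : ℝ) (x : X) : Continuous (fun y => CfR κ x y) :=
  ((continuous_tcos.comp ((continuous_const.dist continuous_id).div_const κ)).pow 2)

lemma measurable_CfR (κ : ℝ) (x : X) : Measurable (fun y => CfR κ x y) :=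
  (continuous_CfR κ x).measurable

lemma measurable_hkCost_snd (κ : ℝ) (x : X) : Measurable (fun y => hkCost κ x y) := by
  unfold hkCost
  refine Measurable.ite ?_ ?_ measurable_const
  · exact measurableSet_lt (continuous_const.dist continuous_id).measurable measurable_const
  · exact ENNReal.measurable_ofReal.comp (measurable_const.mul
      (Real.measurable_log.comp (Real.continuous_cos.measurable.comp
        ((continuous_const.dist continuous_id).div_const κ).measurable)))

lemma measurable_hkCost_pair (κ : ℝ) : Measurable (fun p : X × X => hkCost κ p.1 p.2) := by
  unfold hkCost
  refine Measurable.ite ?_ ?_ measurable_const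
  · exact measurableSet_lt continuous_dist.measurable measurable_const
  · exact ENNReal.measurable_ofReal.comp (measurable_const.mul
      (Real.measurable_log.comp (Real.continuous_cos.measurable.comp
        (continuous_dist.div_const κ).measurable)))

variable [MeasurableSingletonClass X]

/-- The quantity `Ā = ∫ Cf dν`. -/
def mA (κ : ℝ) (x : X) (ν : Measure X) : ℝ≥0∞ := ∫⁻ y, ENNReal.ofReal (CfR κ x y) ∂ν

lemma mA_le_univ (κ : ℝ) (x : X) (ν : Measure X) : mA κ x ν ≤ ν Set.univ := by
  calc mA κ x ν ≤ ∫⁻ _, 1 ∂ν := by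
        apply lintegral_mono
        intro y
        simpa using ENNReal.ofReal_le_one.mpr (CfR_le_one κ x y)
    _ = ν Set.univ := lintegral_one

lemma mA_ne_top (κ : ℝ) (x : X) (ν : Measure X) [IsFiniteMeasure ν] : mA κ x ν ≠ ⊤ :=
  ((mA_le_univ κ x ν).trans_lt (measure_lt_top ν _)).ne

lemma coupling_structure (γ : Measure (X × X)) (x : X)
    (h : γ.map Prod.fst ≪ Measure.dirac x) :
    γ = (γ.map Prod.snd).map (fun y => (x, y)) := by
  have hae : ∀ᵐ p : X × X ∂γ, p.1 = x := by
    rw [ae_iff]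
    have h1 : (γ.map Prod.fst) {x}ᶜ = 0 := by
      apply h
      simp [Measure.dirac_apply]
    rwa [Measure.map_apply measurable_fst (measurableSet_singleton x).compl] at h1
  ext s hs
  rw [Measure.map_apply measurable_prodMk_left hs,
    Measure.map_apply measurable_snd (measurable_prodMk_left hs)]
  apply measure_congr
  filter_upwards [hae] with p hp
  have hpe : (x, p.2) = p := by rw [← hp]
  simp only [eq_iff_iff]
  constructor
  · intro hps; show p.2 ∈ _; simp only [Set.mem_preimage, Set.mem_setOf_eq, hpe]; exact hps
  · intro hps; have : (x, p.2) ∈ s := hps; rwa [hpe] at this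

lemma KLdiv_smul_dirac (s : ℝ≥0∞) (hs : s ≠ ⊤) (x : X) :
    KLdiv (s • Measure.dirac x) (Measure.dirac x) = phiEnt s := by
  have hac : s • Measure.dirac x ≪ Measure.dirac x :=
    Measure.absolutelyContinuous_of_le_smul le_rfl
  rw [KLdiv, if_pos hac]
  have h1 : (s • Measure.dirac x).rnDeriv (Measure.dirac x) =ᵐ[Measure.dirac x] fun _ => s := by
    filter_upwards [Measure.rnDeriv_smul_left_of_ne_top (Measure.dirac x) (Measure.dirac x) hs,
      Measure.rnDeriv_self (Measure.dirac x)] with y h2 h3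
    rw [h2]; simp [h3]
  rw [show (∫⁻ y, phiEnt ((s • Measure.dirac x).rnDeriv (Measure.dirac x) y) ∂(Measure.dirac x))
      = ∫⁻ _, phiEnt s ∂(Measure.dirac x) from
    lintegral_congr_ae (by filter_upwards [h1] with y hy; rw [hy])]
  simp

lemma KLdiv_zero_left (μ : Measure X) : KLdiv 0 μ = μ Set.univ := by
  rw [KLdiv, if_pos (Measure.AbsolutelyContinuous.zero μ)]
  rw [show (∫⁻ y, phiEnt ((0 : Measure X).rnDeriv μ y) ∂μ) = ∫⁻ _, phiEnt 0 ∂μ from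
    lintegral_congr_ae (by filter_upwards [Measure.rnDeriv_zero μ] with y hy; rw [hy]; rfl)]
  simp [phiEnt_zero]

/-- Core inequality in integrated form, for every α. -/
lemma lower_core_alpha (κ : ℝ) (hκ : 0 < κ) (x : X) (ν : Measure X) [IsFiniteMeasure ν]
    (r : X → ℝ≥0∞) (hr : Measurable r) (hs : ∫⁻ y, r y ∂ν ≠ ⊤) (α : ℝ) :
    1 + ν Set.univ ≤ (∫⁻ y, r y * hkCost κ x y ∂ν) + (∫⁻ y, phiEnt (r y) ∂ν)
      + phiEnt (∫⁻ y, r y ∂ν)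
      + (ENNReal.ofReal (Real.exp (-α)) * mA κ x ν + ENNReal.ofReal (Real.exp α)) := by
  set s := ∫⁻ y, r y ∂ν with hsdef
  set Cost := ∫⁻ y, r y * hkCost κ x y ∂ν
  set Phi := ∫⁻ y, phiEnt (r y) ∂ν
  have hmono : ∫⁻ y, (1 + ENNReal.ofReal (max (-α) 0) * r y) ∂ν ≤
      ∫⁻ y, (hkCost κ x y * r y + phiEnt (r y) + ENNReal.ofReal (max α 0) * r y
        + ENNReal.ofReal (CfR κ x y * Real.exp (-α))) ∂ν :=
    lintegral_mono fun y => pointwise_P κ hκ x y (r y) α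
  have hL : ∫⁻ y, (1 + ENNReal.ofReal (max (-α) 0) * r y) ∂ν
      = ν Set.univ + ENNReal.ofReal (max (-α) 0) * s := by
    rw [lintegral_add_left measurable_const, lintegral_const_mul _ hr]
    simp [hsdef]
  have hR : ∫⁻ y, (hkCost κ x y * r y + phiEnt (r y) + ENNReal.ofReal (max α 0) * r y
        + ENNReal.ofReal (CfR κ x y * Real.exp (-α))) ∂ν
      = Cost + Phi + ENNReal.ofReal (max α 0) * s
        + ENNReal.ofReal (Real.exp (-α)) * mA κ x ν := by
    have m1 : Measurable fun y => hkCost κ x y * r y := (measurable_hkCost_snd κ x).mul hr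
    have m2 : Measurable fun y => phiEnt (r y) := measurable_phiEnt.comp hr
    have m3 : Measurable fun y => ENNReal.ofReal (max α 0) * r y := measurable_const.mul hr
    rw [lintegral_add_left (m1.fun_add m2 |>.fun_add m3), lintegral_add_left (m1.fun_add m2),
      lintegral_add_left m1, lintegral_const_mul _ hr]
    congr 1
    · congr 2
      · apply lintegral_congr; intro y; ring
    · rw [mA]
      calc ∫⁻ a, ENNReal.ofReal (CfR κ x a * Real.exp (-α)) ∂ν
          = ∫⁻ a, ENNReal.ofReal (Real.exp (-α)) * ENNReal.ofReal (CfR κ x a) ∂ν := by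
            apply lintegral_congr; intro y
            rw [← ENNReal.ofReal_mul (Real.exp_pos (-α)).le, mul_comm]
        _ = _ := lintegral_const_mul _ (measurable_CfR κ x).ennreal_ofReal
  rw [hL, hR] at hmono
  have hQ := pointwise_Q s hs α
  have hTne : ENNReal.ofReal (max α 0) * s + ENNReal.ofReal (max (-α) 0) * s ≠ ⊤ := by
    apply ENNReal.add_ne_top.mpr
    constructor <;> exact ENNReal.mul_ne_top ENNReal.ofReal_ne_top hs
  rw [← ENNReal.add_le_add_iff_right hTne]
  calc 1 + ν Set.univ + (ENNReal.ofReal (max α 0) * s + ENNReal.ofReal (max (-α) 0) * s)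
      = (ν Set.univ + ENNReal.ofReal (max (-α) 0) * s)
        + (1 + ENNReal.ofReal (max α 0) * s) := by ring
    _ ≤ (Cost + Phi + ENNReal.ofReal (max α 0) * s + ENNReal.ofReal (Real.exp (-α)) * mA κ x ν)
        + (phiEnt s + ENNReal.ofReal (Real.exp α) + ENNReal.ofReal (max (-α) 0) * s) :=
      add_le_add hmono hQ
    _ = Cost + Phi + phiEnt s + (ENNReal.ofReal (Real.exp (-α)) * mA κ x ν
        + ENNReal.ofReal (Real.exp α))
        + (ENNReal.ofReal (max α 0) * s + ENNReal.ofReal (max (-α) 0) * s) := by ring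

lemma lower_core (κ : ℝ) (hκ : 0 < κ) (x : X) (ν : Measure X) [IsFiniteMeasure ν]
    (r : X → ℝ≥0∞) (hr : Measurable r) (hs : ∫⁻ y, r y ∂ν ≠ ⊤) :
    1 + ν Set.univ ≤ (∫⁻ y, r y * hkCost κ x y ∂ν) + (∫⁻ y, phiEnt (r y) ∂ν)
      + phiEnt (∫⁻ y, r y ∂ν)
      + ENNReal.ofReal (2 * Real.sqrt (mA κ x ν).toReal) := by
  set a := (mA κ x ν).toReal with hadef
  have ha0 : 0 ≤ a := ENNReal.toReal_nonneg
  rcases eq_or_ne (mA κ x ν) 0 with hA | hA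
  · -- a = 0 : take α → -∞
    have ha : a = 0 := by rw [hadef, hA]; simp
    rw [ha]
    simp only [Real.sqrt_zero, mul_zero, ENNReal.ofReal_zero, add_zero]
    apply ENNReal.le_of_forall_pos_le_add
    intro ε hε _
    have key := lower_core_alpha κ hκ x ν r hr hs (Real.log ε)
    rw [hA, mul_zero, zero_add] at key
    calc 1 + ν Set.univ ≤ _ + ENNReal.ofReal (Real.exp (Real.log ε)) := key
      _ = _ + ε := by rw [Real.exp_log (by exact_mod_cast hε), ENNReal.ofReal_coe_nnreal]
  · have hapos : 0 < a := by
      rw [hadef]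
      exact ENNReal.toReal_pos hA (mA_ne_top κ x ν)
    have hsq : 0 < Real.sqrt a := Real.sqrt_pos.mpr hapos
    have key := lower_core_alpha κ hκ x ν r hr hs (Real.log (Real.sqrt a))
    have hmA : mA κ x ν = ENNReal.ofReal a := (ENNReal.ofReal_toReal (mA_ne_top κ x ν)).symm
    have h1 : Real.exp (-Real.log (Real.sqrt a)) = (Real.sqrt a)⁻¹ := by
      rw [Real.exp_neg, Real.exp_log hsq]
    have h2 : Real.exp (Real.log (Real.sqrt a)) = Real.sqrt a := Real.exp_log hsq
    rw [h1, h2, hmA, ← ENNReal.ofReal_mul (by positivity)] at key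
    have h3 : (Real.sqrt a)⁻¹ * a = Real.sqrt a := by
      rw [inv_mul_eq_div]; exact Real.div_sqrt
    rw [h3, ← ENNReal.ofReal_add (Real.sqrt_nonneg a) (Real.sqrt_nonneg a)] at key
    calc 1 + ν Set.univ ≤ _ := key
      _ = _ := by rw [two_mul]

lemma lower_bound (κ : ℝ) (hκ : 0 < κ) (x : X) (ν : Measure X) [IsFiniteMeasure ν]
    (γ : Measure (X × X)) (hγ : IsFiniteMeasure γ) :
    1 + ν Set.univ ≤ ((∫⁻ p, hkCost κ p.1 p.2 ∂γ) + KLdiv (γ.map Prod.fst) (Measure.dirac x)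
      + KLdiv (γ.map Prod.snd) ν) + ENNReal.ofReal (2 * Real.sqrt (mA κ x ν).toReal) := by
  by_cases h1 : γ.map Prod.fst ≪ Measure.dirac x
  swap
  · simp only [KLdiv, if_neg h1]; simp
  by_cases h2 : γ.map Prod.snd ≪ ν
  swap
  · simp only [KLdiv, if_neg h2]; simp
  set σ := γ.map Prod.snd with hσdef
  haveI : IsFiniteMeasure σ := by
    constructor
    rw [hσdef, Measure.map_apply measurable_snd MeasurableSet.univ]
    exact measure_lt_top γ _
  have hstruct : γ = σ.map (fun y => (x, y)) := coupling_structure γ x h1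
  set r := σ.rnDeriv ν with hrdef
  have hσw : ν.withDensity r = σ := Measure.withDensity_rnDeriv_eq σ ν h2
  have hrm : Measurable r := Measure.measurable_rnDeriv σ ν
  have hsint : ∫⁻ y, r y ∂ν = σ Set.univ := by
    rw [← hσw, withDensity_apply _ MeasurableSet.univ, setLIntegral_univ]
  have hs : ∫⁻ y, r y ∂ν ≠ ⊤ := by rw [hsint]; exact (measure_lt_top σ _).ne
  -- cost
  have hcost : ∫⁻ p, hkCost κ p.1 p.2 ∂γ = ∫⁻ y, r y * hkCost κ x y ∂ν := by
    rw [hstruct, lintegral_map (measurable_hkCost_pair κ) measurable_prodMk_left, ← hσw,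
      lintegral_withDensity_eq_lintegral_mul ν hrm (measurable_hkCost_snd κ x)]
    rfl
  -- KL1
  have hfst : γ.map Prod.fst = σ Set.univ • Measure.dirac x := by
    rw [hstruct, Measure.map_map measurable_fst measurable_prodMk_left]
    exact Measure.map_const σ x
  have hKL1 : KLdiv (γ.map Prod.fst) (Measure.dirac x) = phiEnt (σ Set.univ) := by
    rw [hfst]; exact KLdiv_smul_dirac _ (measure_lt_top σ _).ne x
  -- KL2
  have hKL2 : KLdiv (γ.map Prod.snd) ν = ∫⁻ y, phiEnt (r y) ∂ν := by
    rw [KLdiv, if_pos h2]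
  rw [hcost, hKL1, hKL2, ← hsint]
  exact (lower_core κ hκ x ν r hrm hs).trans (le_of_eq (by ring))

lemma HK2_le_val (κ : ℝ) (μ ν : Measure X) (γ : Measure (X × X)) (hγ : IsFiniteMeasure γ) :
    HK2 κ μ ν ≤ (∫⁻ p, hkCost κ p.1 p.2 ∂γ) + KLdiv (γ.map Prod.fst) μ
      + KLdiv (γ.map Prod.snd) ν := by
  unfold HK2
  exact iInf_le_of_le γ (iInf_le _ hγ)

lemma betaC_nonneg (t C : ℝ) (ht : 0 < t) (hC0 : 0 ≤ C) (hC1 : C ≤ 1) :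
    0 ≤ (t * Real.log t - t) * C + 1 := by
  rcases le_or_gt 0 (t * Real.log t - t) with h | h
  · nlinarith
  · have h1 : (t * Real.log t - t) * C ≥ (t * Real.log t - t) * 1 := by nlinarith
    have h2 := phiR_nonneg ht.le
    unfold phiR at h2
    nlinarith

lemma pointwise_upper (κ : ℝ) (hκ : 0 < κ) (x y : X) (t : ℝ) (ht : 0 < t) :
    ENNReal.ofReal (t * CfR κ x y) * hkCost κ x y + phiEnt (ENNReal.ofReal (t * CfR κ x y))
      = ENNReal.ofReal ((t * Real.log t - t) * CfR κ x y + 1) := by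
  rcases hkCost_cases κ hκ x y with ⟨hc, hC⟩ | ⟨hc, hC⟩
  · have hlog : 0 ≤ - Real.log (CfR κ x y) := by
      have := Real.log_nonpos (CfR_nonneg κ x y) (CfR_le_one κ x y)
      linarith
    rw [hc, phiEnt_eq_ofReal ENNReal.ofReal_ne_top,
      ENNReal.toReal_ofReal (by positivity),
      ← ENNReal.ofReal_mul (by positivity),
      ← ENNReal.ofReal_add (mul_nonneg (by positivity) hlog)
        (phiR_nonneg (by positivity))]
    congr 1
    rw [phiR, Real.log_mul ht.ne' hC.ne']
    ring
  · rw [hC, hc]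
    simp [phiEnt_zero]

lemma upper_bound (κ : ℝ) (hκ : 0 < κ) (x : X) (ν : Measure X) [IsFiniteMeasure ν] :
    HK2 κ (Measure.dirac x) ν + ENNReal.ofReal (2 * Real.sqrt (mA κ x ν).toReal)
      ≤ 1 + ν Set.univ := by
  set a := (mA κ x ν).toReal with hadef
  have hmA : mA κ x ν = ENNReal.ofReal a := (ENNReal.ofReal_toReal (mA_ne_top κ x ν)).symm
  have haV : a ≤ (ν Set.univ).toReal :=
    ENNReal.toReal_le_toReal (mA_ne_top κ x ν) (measure_lt_top ν _).ne |>.mpr (mA_le_univ κ x ν)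
  rcases eq_or_ne (mA κ x ν) 0 with hA | hA
  · have ha : a = 0 := by rw [hadef, hA]; simp
    rw [ha]
    simp only [Real.sqrt_zero, mul_zero, ENNReal.ofReal_zero, add_zero]
    refine le_trans (HK2_le_val κ _ ν 0 inferInstance) ?_
    rw [lintegral_zero_measure, Measure.map_zero, Measure.map_zero, KLdiv_zero_left,
      KLdiv_zero_left]
    simp
  · have hapos : 0 < a := ENNReal.toReal_pos hA (mA_ne_top κ x ν)
    have hsq : 0 < Real.sqrt a := Real.sqrt_pos.mpr hapos
    set t : ℝ := (Real.sqrt a)⁻¹ with htdef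
    have ht : 0 < t := by positivity
    have hta : t * a = Real.sqrt a := by
      rw [htdef, inv_mul_eq_div]; exact Real.div_sqrt
    set ft : X → ℝ≥0∞ := fun y => ENNReal.ofReal (t * CfR κ x y) with hftdef
    have hft : Measurable ft := ((measurable_CfR κ x).const_mul t).ennreal_ofReal
    set σ : Measure X := ν.withDensity ft with hσdef
    have hσu : σ Set.univ = ENNReal.ofReal (t * a) := by
      rw [hσdef, withDensity_apply _ MeasurableSet.univ, setLIntegral_univ]
      calc ∫⁻ y, ft y ∂ν = ∫⁻ y, ENNReal.ofReal t * ENNReal.ofReal (CfR κ x y) ∂ν := by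
            apply lintegral_congr; intro y
            rw [hftdef, ← ENNReal.ofReal_mul ht.le]
        _ = ENNReal.ofReal t * mA κ x ν :=
            lintegral_const_mul _ (measurable_CfR κ x).ennreal_ofReal
        _ = ENNReal.ofReal (t * a) := by rw [hmA, ← ENNReal.ofReal_mul ht.le]
    haveI hσfin : IsFiniteMeasure σ := ⟨by rw [hσu]; exact ENNReal.ofReal_lt_top⟩
    set γ₀ : Measure (X × X) := σ.map (fun y => (x, y)) with hγdef
    haveI hγfin : IsFiniteMeasure γ₀ := by
      constructor
      rw [hγdef, Measure.map_apply measurable_prodMk_left MeasurableSet.univ]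
      exact measure_lt_top σ _
    have hcost : ∫⁻ p, hkCost κ p.1 p.2 ∂γ₀ = ∫⁻ y, ft y * hkCost κ x y ∂ν := by
      rw [hγdef, lintegral_map (measurable_hkCost_pair κ) measurable_prodMk_left, hσdef,
        lintegral_withDensity_eq_lintegral_mul ν hft (measurable_hkCost_snd κ x)]
      rfl
    have hfst : γ₀.map Prod.fst = σ Set.univ • Measure.dirac x := by
      rw [hγdef, Measure.map_map measurable_fst measurable_prodMk_left]
      exact Measure.map_const σ x
    have hKL1 : KLdiv (γ₀.map Prod.fst) (Measure.dirac x) = phiEnt (σ Set.univ) := by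
      rw [hfst]; exact KLdiv_smul_dirac _ (measure_lt_top σ _).ne x
    have hsnd : γ₀.map Prod.snd = σ := by
      rw [hγdef, Measure.map_map measurable_snd measurable_prodMk_left]
      exact Measure.map_id
    have hKL2 : KLdiv (γ₀.map Prod.snd) ν = ∫⁻ y, phiEnt (ft y) ∂ν := by
      rw [hsnd, KLdiv, if_pos (withDensity_absolutelyContinuous ν ft)]
      apply lintegral_congr_ae
      filter_upwards [Measure.rnDeriv_withDensity ν hft] with y hy
      rw [hσdef, hy]
    -- Bochner side
    have hCint : Integrable (fun y => CfR κ x y) ν := by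
      refine ⟨(measurable_CfR κ x).aestronglyMeasurable, HasFiniteIntegral.of_bounded (C := 1) ?_⟩
      filter_upwards with y
      rw [Real.norm_eq_abs, abs_of_nonneg (CfR_nonneg κ x y)]
      exact CfR_le_one κ x y
    have hIeq : ∫ y, CfR κ x y ∂ν = a := by
      have h1 := ofReal_integral_eq_lintegral_ofReal hCint
        (Filter.Eventually.of_forall fun y => CfR_nonneg κ x y)
      have h2 : ENNReal.ofReal (∫ y, CfR κ x y ∂ν) = ENNReal.ofReal a := by
        rw [h1]; exact hmA.symm ▸ rfl
      calc ∫ y, CfR κ x y ∂ν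
          = (ENNReal.ofReal (∫ y, CfR κ x y ∂ν)).toReal :=
            (ENNReal.toReal_ofReal (integral_nonneg fun y => CfR_nonneg κ x y)).symm
        _ = a := by rw [h2, ENNReal.toReal_ofReal hapos.le]
    set β : ℝ := t * Real.log t - t with hβdef
    have hsum : ∫⁻ y, ft y * hkCost κ x y ∂ν + ∫⁻ y, phiEnt (ft y) ∂ν
        = ENNReal.ofReal (β * a + (ν Set.univ).toReal) := by
      rw [← lintegral_add_left (hft.fun_mul (measurable_hkCost_snd κ x))]
      have hpt : ∀ y, ft y * hkCost κ x y + phiEnt (ft y)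
          = ENNReal.ofReal (β * CfR κ x y + 1) := fun y => pointwise_upper κ hκ x y t ht
      rw [lintegral_congr hpt]
      have hInt2 : Integrable (fun y => β * CfR κ x y + 1) ν :=
        (hCint.const_mul β).add (integrable_const 1)
      rw [← ofReal_integral_eq_lintegral_ofReal hInt2
        (Filter.Eventually.of_forall fun y =>
          betaC_nonneg t (CfR κ x y) ht (CfR_nonneg κ x y) (CfR_le_one κ x y))]
      congr 1
      rw [integral_add (hCint.const_mul β) (integrable_const 1), integral_const]
      have hmul : ∫ y, β * CfR κ x y ∂ν = β * a := by
        rw [← hIeq, show (fun y => β * CfR κ x y) = fun y => β • CfR κ x y from rfl,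
          integral_smul, smul_eq_mul]
      rw [hmul]
      simp [smul_eq_mul, Measure.real]
    have hKL1v : phiEnt (σ Set.univ) = ENNReal.ofReal (phiR (t * a)) := by
      rw [hσu, phiEnt_eq_ofReal ENNReal.ofReal_ne_top,
        ENNReal.toReal_ofReal (by positivity)]
    have hβa : 0 ≤ β * a + (ν Set.univ).toReal := by
      rcases le_or_gt 0 β with h | h
      · have : 0 ≤ β * a := mul_nonneg h hapos.le
        have := ENNReal.toReal_nonneg (a := ν Set.univ)
        linarith
      · have h1 : β * a ≥ β * (ν Set.univ).toReal := by nlinarith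
        have h2 := phiR_nonneg ht.le
        unfold phiR at h2
        have hV0 : 0 ≤ (ν Set.univ).toReal := ENNReal.toReal_nonneg
        nlinarith
    have halg : β * a + (ν Set.univ).toReal + phiR (t * a) + 2 * Real.sqrt a
        = 1 + (ν Set.univ).toReal := by
      have e1 : β * a = - Real.log (Real.sqrt a) * Real.sqrt a - Real.sqrt a := by
        have : Real.log t = - Real.log (Real.sqrt a) := by
          rw [htdef, Real.log_inv]
        calc β * a = Real.log t * (t * a) - (t * a) := by rw [hβdef]; ring
          _ = _ := by rw [this, hta]
      rw [phiR, hta, e1]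
      ring
    calc HK2 κ (Measure.dirac x) ν + ENNReal.ofReal (2 * Real.sqrt a)
        ≤ ((∫⁻ p, hkCost κ p.1 p.2 ∂γ₀) + KLdiv (γ₀.map Prod.fst) (Measure.dirac x)
            + KLdiv (γ₀.map Prod.snd) ν) + ENNReal.ofReal (2 * Real.sqrt a) :=
          add_le_add_left (HK2_le_val κ _ ν γ₀ hγfin) _
      _ = (ENNReal.ofReal (β * a + (ν Set.univ).toReal) + ENNReal.ofReal (phiR (t * a)))
            + ENNReal.ofReal (2 * Real.sqrt a) := by
          rw [hcost, hKL1, hKL2, hKL1v, ← hsum]; ring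
      _ = ENNReal.ofReal (β * a + (ν Set.univ).toReal + phiR (t * a) + 2 * Real.sqrt a) := by
          rw [← ENNReal.ofReal_add hβa (phiR_nonneg (by positivity)),
            ← ENNReal.ofReal_add (by linarith [phiR_nonneg (show (0:ℝ) ≤ t * a by positivity)])
              (by positivity)]
      _ = ENNReal.ofReal (1 + (ν Set.univ).toReal) := by rw [halg]
      _ = 1 + ν Set.univ := by
          rw [ENNReal.ofReal_add (by norm_num) ENNReal.toReal_nonneg, ENNReal.ofReal_one,
            ENNReal.ofReal_toReal (measure_lt_top ν _).ne]

/-- Value of `HK2` between a Dirac and a finite measure. -/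
def hkVal (κ : ℝ) (x : X) (ν : Measure X) : ℝ :=
  1 + (ν Set.univ).toReal - 2 * Real.sqrt (mA κ x ν).toReal

lemma two_sqrt_le (a V : ℝ) (ha : 0 ≤ a) (haV : a ≤ V) : 2 * Real.sqrt a ≤ 1 + V := by
  nlinarith [sq_sqrt ha, sq_nonneg (Real.sqrt a - 1)]

lemma hkVal_nonneg (κ : ℝ) (x : X) (ν : Measure X) [IsFiniteMeasure ν] : 0 ≤ hkVal κ x ν := by
  have haV : (mA κ x ν).toReal ≤ (ν Set.univ).toReal :=
    ENNReal.toReal_le_toReal (mA_ne_top κ x ν) (measure_lt_top ν _).ne |>.mpr (mA_le_univ κ x ν)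
  have := two_sqrt_le (mA κ x ν).toReal (ν Set.univ).toReal ENNReal.toReal_nonneg haV
  unfold hkVal; linarith

theorem HK2_dirac_eq (κ : ℝ) (hκ : 0 < κ) (x : X) (ν : Measure X) [IsFiniteMeasure ν] :
    HK2 κ (Measure.dirac x) ν = ENNReal.ofReal (hkVal κ x ν) := by
  have hc_ne : ENNReal.ofReal (2 * Real.sqrt (mA κ x ν).toReal) ≠ ⊤ := ENNReal.ofReal_ne_top
  have haV : (mA κ x ν).toReal ≤ (ν Set.univ).toReal :=
    ENNReal.toReal_le_toReal (mA_ne_top κ x ν) (measure_lt_top ν _).ne |>.mpr (mA_le_univ κ x ν)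
  have hformula : HK2 κ (Measure.dirac x) ν
      + ENNReal.ofReal (2 * Real.sqrt (mA κ x ν).toReal) = 1 + ν Set.univ := by
    refine le_antisymm (upper_bound κ hκ x ν) ?_
    have hlow : ENNReal.ofReal (1 + (ν Set.univ).toReal)
        - ENNReal.ofReal (2 * Real.sqrt (mA κ x ν).toReal) ≤ HK2 κ (Measure.dirac x) ν := by
      refine le_iInf fun γ => le_iInf fun hγ => ?_
      rw [tsub_le_iff_right]
      have := lower_bound κ hκ x ν γ hγ
      rwa [ENNReal.ofReal_add (by norm_num) ENNReal.toReal_nonneg, ENNReal.ofReal_one,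
        ENNReal.ofReal_toReal (measure_lt_top ν _).ne]
    have hc_le : ENNReal.ofReal (2 * Real.sqrt (mA κ x ν).toReal)
        ≤ ENNReal.ofReal (1 + (ν Set.univ).toReal) :=
      ENNReal.ofReal_le_ofReal (two_sqrt_le _ _ ENNReal.toReal_nonneg haV)
    calc 1 + ν Set.univ = ENNReal.ofReal (1 + (ν Set.univ).toReal) := by
          rw [ENNReal.ofReal_add (by norm_num) ENNReal.toReal_nonneg, ENNReal.ofReal_one,
            ENNReal.ofReal_toReal (measure_lt_top ν _).ne]
      _ = ENNReal.ofReal (1 + (ν Set.univ).toReal)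
            - ENNReal.ofReal (2 * Real.sqrt (mA κ x ν).toReal)
            + ENNReal.ofReal (2 * Real.sqrt (mA κ x ν).toReal) :=
          (tsub_add_cancel_of_le hc_le).symm
      _ ≤ _ := add_le_add_left hlow _
  have := ENNReal.eq_sub_of_add_eq hc_ne hformula
  rw [this]
  rw [show (1 : ℝ≥0∞) + ν Set.univ = ENNReal.ofReal (1 + (ν Set.univ).toReal) by
    rw [ENNReal.ofReal_add (by norm_num) ENNReal.toReal_nonneg, ENNReal.ofReal_one,
      ENNReal.ofReal_toReal (measure_lt_top ν _).ne]]
  rw [← ENNReal.ofReal_sub _ (by positivity)]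
  rfl


/-- Atomic measure from weights and points. -/
def aMeas {N : ℕ} (c : Fin N → ℝ) (y : Fin N → X) : Measure X :=
  ∑ j, ENNReal.ofReal (c j) • Measure.dirac (y j)

instance aMeas_finite {N : ℕ} (c : Fin N → ℝ) (y : Fin N → X) : IsFiniteMeasure (aMeas c y) := by
  constructor
  rw [aMeas]
  simp only [Measure.coe_finset_sum, Finset.sum_apply, Measure.smul_apply, smul_eq_mul]
  refine ENNReal.sum_lt_top.mpr fun j _ => ?_
  exact ENNReal.mul_lt_top ENNReal.ofReal_lt_top (measure_lt_top _ _)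

lemma lintegral_aMeas {N : ℕ} (c : Fin N → ℝ) (y : Fin N → X) (f : X → ℝ≥0∞) :
    ∫⁻ z, f z ∂(aMeas c y) = ∑ j, ENNReal.ofReal (c j) * f (y j) := by
  rw [aMeas, lintegral_finset_sum_measure]
  congr 1
  ext j
  rw [lintegral_smul_measure, lintegral_dirac, smul_eq_mul]

lemma aMeas_univ {N : ℕ} (c : Fin N → ℝ) (y : Fin N → X) :
    (aMeas c y) Set.univ = ∑ j, ENNReal.ofReal (c j) := by
  have := lintegral_aMeas c y (fun _ => 1)
  simpa [lintegral_one] using this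

lemma aMeas_univ_toReal {N : ℕ} (c : Fin N → ℝ) (hc : ∀ j, 0 ≤ c j) (y : Fin N → X) :
    ((aMeas c y) Set.univ).toReal = ∑ j, c j := by
  rw [aMeas_univ, ← ENNReal.ofReal_sum_of_nonneg fun j _ => hc j,
    ENNReal.toReal_ofReal (Finset.sum_nonneg fun j _ => hc j)]

lemma mA_aMeas (κ : ℝ) (x : X) {N : ℕ} (c : Fin N → ℝ) (hc : ∀ j, 0 ≤ c j) (y : Fin N → X) :
    (mA κ x (aMeas c y)).toReal = ∑ j, c j * CfR κ x (y j) := by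
  rw [mA, lintegral_aMeas]
  have h1 : ∀ j : Fin N, ENNReal.ofReal (c j) * ENNReal.ofReal (CfR κ x (y j))
      = ENNReal.ofReal (c j * CfR κ x (y j)) := fun j => (ENNReal.ofReal_mul (hc j)).symm
  rw [Finset.sum_congr rfl fun j _ => h1 j,
    ← ENNReal.ofReal_sum_of_nonneg fun j _ => mul_nonneg (hc j) (CfR_nonneg κ x (y j)),
    ENNReal.toReal_ofReal
      (Finset.sum_nonneg fun j _ => mul_nonneg (hc j) (CfR_nonneg κ x (y j)))]

lemma hkVal_aMeas (κ : ℝ) (x : X) {N : ℕ} (c : Fin N → ℝ) (hc : ∀ j, 0 ≤ c j) (y : Fin N → X) :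
    hkVal κ x (aMeas c y)
      = 1 + (∑ j, c j) - 2 * Real.sqrt (∑ j, c j * CfR κ x (y j)) := by
  rw [hkVal, aMeas_univ_toReal c hc y, mA_aMeas κ x c hc y]

lemma JDirac_formula (κ : ℝ) (hκ : 0 < κ) {n : ℕ} (m : Fin n → ℝ≥0) (x : Fin n → X)
    (ν : Measure X) [IsFiniteMeasure ν] :
    JDirac (∑ i, (m i : ℝ≥0∞) • Measure.dirac (x i)) κ ν
      = ENNReal.ofReal (∑ i, (m i : ℝ) * hkVal κ (x i) ν) := by
  rw [JDirac, lintegral_finset_sum_measure]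
  have h1 : ∀ i : Fin n, ∫⁻ z, HK2 κ (Measure.dirac z) ν ∂((m i : ℝ≥0∞) • Measure.dirac (x i))
      = ENNReal.ofReal ((m i : ℝ) * hkVal κ (x i) ν) := by
    intro i
    rw [lintegral_smul_measure, lintegral_dirac, HK2_dirac_eq κ hκ (x i) ν,
      ENNReal.ofReal_mul (m i).coe_nonneg]
    congr 1
    exact (ENNReal.ofReal_coe_nnreal).symm
  rw [Finset.sum_congr rfl fun i _ => h1 i,
    ← ENNReal.ofReal_sum_of_nonneg fun i _ =>
      mul_nonneg (m i).coe_nonneg (hkVal_nonneg κ (x i) ν)]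

/-- difference of square roots. -/
lemma sqrt_diff_eq (a h : ℝ) (ha : 0 ≤ a) (hh : 0 ≤ h) :
    Real.sqrt (a + h) - Real.sqrt a = h / (Real.sqrt (a + h) + Real.sqrt a) := by
  rcases eq_or_lt_of_le (add_nonneg ha hh) with h0 | h0
  · have ha0 : a = 0 := by linarith [ha, hh]
    have hh0 : h = 0 := by linarith
    simp [ha0, hh0]
  · have hd : 0 < Real.sqrt (a + h) + Real.sqrt a := by
      have := Real.sqrt_pos.mpr h0
      have := Real.sqrt_nonneg a
      linarith
    rw [eq_div_iff hd.ne']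
    have h1 : Real.sqrt (a + h) ^ 2 = a + h := Real.sq_sqrt (by linarith)
    have h2 : Real.sqrt a ^ 2 = a := Real.sq_sqrt ha
    nlinarith

lemma amgm_sqrt (z w : ℝ) (hz : 0 ≤ z) (hw : 0 < w) :
    2 * Real.sqrt z ≤ z / Real.sqrt w + Real.sqrt w := by
  have hsw : 0 < Real.sqrt w := Real.sqrt_pos.mpr hw
  rw [div_add' _ _ _ hsw.ne', le_div_iff₀ hsw]
  nlinarith [sq_nonneg (Real.sqrt z - Real.sqrt w), Real.sq_sqrt hz, Real.sq_sqrt hw.le,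
    Real.sqrt_nonneg z, Real.sqrt_nonneg w]

/-- Mass reduction along a linear dependence. -/
lemma mass_reduction {N n : ℕ} (w : Fin N → (Fin n → ℝ)) (c : Fin N → ℝ)
    (hc : ∀ j, 0 ≤ c j) (lam : Fin N → ℝ) (hlam0 : ∑ j, lam j • w j = 0)
    (hlamne : lam ≠ 0) :
    ∃ (c' : Fin N → ℝ) (j0 : Fin N), (∀ j, 0 ≤ c' j) ∧ c' j0 = 0 ∧
      (∑ j, c' j) ≤ (∑ j, c j) ∧ (∑ j, c' j • w j) = ∑ j, c j • w j := by
  obtain ⟨μ, hμ0, hμsum, hμne⟩ : ∃ μ : Fin N → ℝ, (∑ j, μ j • w j) = 0 ∧ 0 ≤ ∑ j, μ j ∧ μ ≠ 0 := by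
    rcases le_or_gt 0 (∑ j, lam j) with h | h
    · exact ⟨lam, hlam0, h, hlamne⟩
    · refine ⟨-lam, ?_, ?_, ?_⟩
      · have h2 : ∑ j, (-lam) j • w j = -∑ j, lam j • w j := by
          rw [← Finset.sum_neg_distrib]
          congr 1; ext j; simp [neg_smul]
        rw [h2, hlam0, neg_zero]
      · have h2 : ∑ j, (-lam) j = -∑ j, lam j := by simp
        rw [h2]; linarith
      · simpa using hlamne
  have hpos : ∃ j, 0 < μ j := by
    by_contra hcon
    push_neg at hcon
    have hsle : ∑ j, μ j ≤ 0 := Finset.sum_nonpos fun j _ => hcon j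
    have hse : ∑ j, μ j = 0 := le_antisymm hsle hμsum
    have hall : ∀ j ∈ Finset.univ, μ j = 0 :=
      (Finset.sum_eq_zero_iff_of_nonpos fun j _ => hcon j).mp hse
    exact hμne (funext fun j => hall j (Finset.mem_univ j))
  obtain ⟨jp, hjp⟩ := hpos
  set S := Finset.univ.filter (fun j => 0 < μ j) with hSdef
  have hSne : S.Nonempty := ⟨jp, by simp [hSdef, hjp]⟩
  obtain ⟨j0, hj0S, hj0min⟩ := S.exists_min_image (fun j => c j / μ j) hSne
  set τ := c j0 / μ j0 with hτdef
  have hμj0 : 0 < μ j0 := by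
    have := hj0S
    simp only [hSdef, Finset.mem_filter, Finset.mem_univ, true_and] at this
    exact this
  have hτ0 : 0 ≤ τ := div_nonneg (hc j0) hμj0.le
  refine ⟨fun j => c j - τ * μ j, j0, ?_, ?_, ?_, ?_⟩
  · intro j
    rcases le_or_gt (μ j) 0 with h | h
    · have h2 : τ * μ j ≤ 0 := mul_nonpos_iff.mpr (Or.inl ⟨hτ0, h⟩)
      have := hc j
      simp only []
      linarith
    · have hjS : j ∈ S := by simp [hSdef, h]
      have h2 := hj0min j hjS
      have h3 : τ * μ j ≤ c j := by
        rw [div_le_div_iff₀ hμj0 h] at h2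
        rw [hτdef, div_mul_eq_mul_div, div_le_iff₀ hμj0]
        nlinarith
      simp only []
      linarith
  · simp only []
    rw [hτdef, div_mul_cancel₀ _ hμj0.ne']
    ring
  · rw [Finset.sum_sub_distrib, ← Finset.mul_sum]
    have h2 : 0 ≤ τ * ∑ j, μ j := mul_nonneg hτ0 hμsum
    linarith
  · have h2 : ∑ j, (c j - τ * μ j) • w j = ∑ j, c j • w j - τ • ∑ j, μ j • w j := by
      rw [Finset.smul_sum, ← Finset.sum_sub_distrib]
      congr 1; ext j; rw [sub_smul, smul_smul]
    rw [h2, hμ0, smul_zero, sub_zero]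

section Main
variable [CompactSpace X] [Nonempty X]

theorem exists_discrete_min (κ : ℝ) (hκ : 0 < κ) {n : ℕ} (m : Fin n → ℝ≥0)
    (hm : ∑ i, (m i : ℝ) = 1) (x : Fin n → X) :
    ∃ (ct : Fin n → ℝ) (yt : Fin n → X), (∀ i, 0 ≤ ct i) ∧
      ∀ (ν : Measure X), IsFiniteMeasure ν →
        (∑ i, (m i : ℝ) * hkVal κ (x i) (aMeas ct yt)) ≤ ∑ i, (m i : ℝ) * hkVal κ (x i) ν := by
  classical
  -- The functional on (n+1)-atom configurations
  set G : (Fin (n+1) → ℝ) × (Fin (n+1) → X) → ℝ := fun p =>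
    ∑ i, (m i : ℝ) * (1 + (∑ j, p.1 j) - 2 * Real.sqrt (∑ j, p.1 j * CfR κ (x i) (p.2 j)))
    with hGdef
  have hGc : Continuous G := by
    apply continuous_finset_sum
    intro i _
    refine continuous_const.mul (Continuous.sub ?_ ?_)
    · exact continuous_const.add
        (continuous_finset_sum _ fun j _ => (continuous_apply j).comp continuous_fst)
    · refine continuous_const.mul (Real.continuous_sqrt.comp ?_)
      exact continuous_finset_sum _ fun j _ =>
        ((continuous_apply j).comp continuous_fst).mul
          ((continuous_CfR κ (x i)).comp ((continuous_apply j).comp continuous_snd))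
  set K : Set ((Fin (n+1) → ℝ) × (Fin (n+1) → X)) :=
    (Set.univ.pi fun _ => Set.Icc (0:ℝ) 5) ×ˢ (Set.univ : Set (Fin (n+1) → X)) with hKdef
  have hKc : IsCompact K :=
    (isCompact_univ_pi fun _ => isCompact_Icc).prod isCompact_univ
  have hmemK : ∀ p : (Fin (n+1) → ℝ) × (Fin (n+1) → X),
      p ∈ K ↔ ∀ j, 0 ≤ p.1 j ∧ p.1 j ≤ 5 := by
    intro p
    rw [hKdef, Set.mem_prod, Set.mem_univ_pi]
    simp [Set.mem_Icc]
  have hKne : K.Nonempty := by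
    refine ⟨(fun _ => 0, fun _ => Classical.arbitrary _), ?_⟩
    rw [hmemK]
    intro j; norm_num
  obtain ⟨p₀, hp₀K, hp₀min⟩ := hKc.exists_isMinOn hKne hGc.continuousOn
  have hp₀c := (hmemK p₀).mp hp₀K
  -- helper: expansion of normal forms
  have hexpand : ∀ (a : ℝ) (g : Fin n → ℝ),
      ∑ i, (m i : ℝ) * (1 + a - 2 * g i) = (1 + a) - 2 * ∑ i, (m i : ℝ) * g i := by
    intro a g
    rw [Finset.sum_congr rfl (fun i _ => show (m i : ℝ) * (1 + a - 2 * g i)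
      = (m i : ℝ) * (1 + a) - 2 * ((m i : ℝ) * g i) by ring)]
    rw [Finset.sum_sub_distrib, ← Finset.sum_mul, hm, ← Finset.mul_sum]
    ring
  -- G p₀ ≤ 1
  have hG1 : G p₀ ≤ 1 := by
    have hz : ((fun _ => (0:ℝ)), p₀.2) ∈ K := by rw [hmemK]; intro j; norm_num
    have := hp₀min hz
    calc G p₀ ≤ G ((fun _ => (0:ℝ)), p₀.2) := this
      _ = 1 := by
        rw [hGdef]
        simp only [Finset.sum_const_zero, zero_mul, Real.sqrt_zero, mul_zero, sub_zero,
          add_zero]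
        simpa using hm
  -- total mass bound at min
  set M₀ := ∑ j, p₀.1 j with hM₀def
  have hM₀0 : 0 ≤ M₀ := Finset.sum_nonneg fun j _ => (hp₀c j).1
  have hM₀4 : M₀ ≤ 4 := by
    have hGlow : (1 + M₀) - 2 * Real.sqrt M₀ ≤ G p₀ := by
      rw [hGdef]
      have h1 : ∀ i : Fin n, (m i : ℝ) * (1 + M₀ - 2 * Real.sqrt M₀)
          ≤ (m i : ℝ) * (1 + (∑ j, p₀.1 j) - 2 * Real.sqrt (∑ j, p₀.1 j * CfR κ (x i) (p₀.2 j))) := by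
        intro i
        apply mul_le_mul_of_nonneg_left _ (m i).coe_nonneg
        have hsle : ∑ j, p₀.1 j * CfR κ (x i) (p₀.2 j) ≤ M₀ := by
          rw [hM₀def]
          refine Finset.sum_le_sum fun j _ => ?_
          nlinarith [(hp₀c j).1, CfR_le_one κ (x i) (p₀.2 j), CfR_nonneg κ (x i) (p₀.2 j)]
        have := Real.sqrt_le_sqrt hsle
        simp only [← hM₀def]
        linarith
      calc (1 + M₀) - 2 * Real.sqrt M₀
          = ∑ i, (m i : ℝ) * (1 + M₀ - 2 * Real.sqrt M₀) := by
            rw [← Finset.sum_mul, hm, one_mul]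
        _ ≤ _ := Finset.sum_le_sum fun i _ => h1 i
    have h2 : M₀ ≤ 2 * Real.sqrt M₀ := by linarith
    nlinarith [Real.sq_sqrt hM₀0, Real.sqrt_nonneg M₀]
  -- linear dependence and mass reduction
  set w : Fin (n+1) → (Fin n → ℝ) := fun j i => CfR κ (x i) (p₀.2 j) with hwdef
  have hdep : ¬ LinearIndependent ℝ w := by
    intro h
    have := h.fintype_card_le_finrank
    rw [Module.finrank_fintype_fun_eq_card] at this
    have h2 : n + 1 ≤ n := by simpa using this
    omega
  obtain ⟨lam, hlam0, i0, hlami0⟩ := Fintype.not_linearIndependent_iff.mp hdep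
  have hlamne : lam ≠ 0 := fun h => hlami0 (by rw [h]; rfl)
  obtain ⟨c', j0, hc'0, hc'j0, hc'sum, hc'vec⟩ :=
    mass_reduction w p₀.1 (fun j => (hp₀c j).1) lam hlam0 hlamne
  have hc'A : ∀ i, ∑ j, c' j * w j i = ∑ j, p₀.1 j * w j i := by
    intro i
    have := congrFun hc'vec i
    simpa [Finset.sum_apply, Pi.smul_apply, smul_eq_mul] using this
  -- the reduced configuration
  set ct : Fin n → ℝ := fun i => c' (j0.succAbove i) with hctdef
  set yt : Fin n → X := fun i => p₀.2 (j0.succAbove i) with hytdef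
  have hct0 : ∀ i, 0 ≤ ct i := fun i => hc'0 _
  set Mt := ∑ i, ct i with hMtdef
  set at_ : Fin n → ℝ := fun i => ∑ i', ct i' * CfR κ (x i) (yt i') with hatdef
  have hat0 : ∀ i, 0 ≤ at_ i := fun i =>
    Finset.sum_nonneg fun i' _ => mul_nonneg (hct0 i') (CfR_nonneg _ _ _)
  have hMtsum : ∑ j, c' j = Mt := by
    rw [Fin.sum_univ_succAbove (fun j => c' j) j0, hc'j0, zero_add, hMtdef]
  have hMt0 : 0 ≤ Mt := Finset.sum_nonneg fun i _ => hct0 i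
  have hMt4 : Mt ≤ 4 := by rw [← hMtsum]; linarith [hc'sum, hM₀4]
  have hctle : ∀ i, ct i ≤ 4 := by
    intro i
    calc ct i ≤ Mt := Finset.single_le_sum (fun i' _ => hct0 i') (Finset.mem_univ i)
      _ ≤ 4 := hMt4
  have hatA : ∀ i, ∑ j, c' j * CfR κ (x i) (p₀.2 j) = at_ i := by
    intro i
    rw [Fin.sum_univ_succAbove (fun j => c' j * CfR κ (x i) (p₀.2 j)) j0, hc'j0, zero_mul,
      zero_add]
  -- minimality of the reduced value
  set Sv := ∑ i, (m i : ℝ) * Real.sqrt (at_ i) with hSvdef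
  set gmin := (1 + Mt) - 2 * Sv with hgmindef
  have hgmin_le : ∀ p ∈ K, gmin ≤ G p := by
    intro p hp
    have h1 : G (c', p₀.2) = gmin := by
      rw [hGdef]
      simp only []
      rw [Finset.sum_congr rfl (fun i _ => by rw [hatA i, hMtsum])]
      exact hexpand Mt (fun i => Real.sqrt (at_ i))
    have h2 : G (c', p₀.2) ≤ G p₀ := by
      rw [hGdef]
      refine Finset.sum_le_sum fun i _ => ?_
      apply mul_le_mul_of_nonneg_left _ (m i).coe_nonneg
      have e1 : ∑ j, c' j * CfR κ (x i) (p₀.2 j) = ∑ j, p₀.1 j * CfR κ (x i) (p₀.2 j) :=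
        hc'A i
      simp only []
      rw [e1]
      have := hc'sum
      linarith
    calc gmin = G (c', p₀.2) := h1.symm
      _ ≤ G p₀ := h2
      _ ≤ G p := hp₀min hp
  have hc'le4 : ∀ j, c' j ≤ 4 := by
    intro j
    calc c' j ≤ ∑ j', c' j' :=
          Finset.single_le_sum (fun j' _ => hc'0 j') (Finset.mem_univ j)
      _ ≤ ∑ j, p₀.1 j := hc'sum
      _ ≤ 4 := hM₀4
  -- Perturbation 1 : adding mass ε at an arbitrary point y
  have hpert : ∀ (y : X) (ε : ℝ), 0 ≤ ε → ε ≤ 1 →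
      gmin ≤ (1 + (ε + Mt)) - 2 * ∑ i, (m i : ℝ) * Real.sqrt (ε * CfR κ (x i) y + at_ i) := by
    intro y ε hε0 hε1
    set cE := Function.update c' j0 ε with hcEdef
    set yE := Function.update p₀.2 j0 y with hyEdef
    have hmem : (cE, yE) ∈ K := by
      rw [hmemK]
      intro j
      rcases eq_or_ne j j0 with h | h
      · subst h; rw [hcEdef]; simp only [Function.update_self]; constructor <;> linarith
      · rw [hcEdef]; simp only [Function.update_of_ne h]
        exact ⟨hc'0 j, by linarith [hc'le4 j]⟩
    have h0 := hgmin_le _ hmem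
    have hs1 : ∑ j, cE j = ε + Mt := by
      rw [Fin.sum_univ_succAbove (fun j => cE j) j0]
      rw [hcEdef]
      simp only [Function.update_self]
      congr 1
      rw [hMtdef]
      apply Finset.sum_congr rfl
      intro i _
      rw [Function.update_of_ne (Fin.succAbove_ne j0 i)]
    have hs2 : ∀ i, ∑ j, cE j * CfR κ (x i) (yE j) = ε * CfR κ (x i) y + at_ i := by
      intro i
      rw [Fin.sum_univ_succAbove (fun j => cE j * CfR κ (x i) (yE j)) j0]
      rw [hcEdef, hyEdef]
      simp only [Function.update_self]
      congr 1
      rw [hatdef]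
      apply Finset.sum_congr rfl
      intro i' _
      rw [Function.update_of_ne (Fin.succAbove_ne j0 i'), Function.update_of_ne
        (Fin.succAbove_ne j0 i')]
    calc gmin ≤ G (cE, yE) := h0
      _ = ∑ i, (m i : ℝ) * (1 + (ε + Mt) - 2 * Real.sqrt (ε * CfR κ (x i) y + at_ i)) := by
          rw [hGdef]
          apply Finset.sum_congr rfl
          intro i _
          rw [show (cE, yE).1 = cE from rfl, show (cE, yE).2 = yE from rfl, hs1, hs2 i]
      _ = _ := hexpand (ε + Mt) _
  -- Perturbation 2 : scaling
  have hscale : ∀ t : ℝ, 0 ≤ t → t ≤ 5/4 →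
      gmin ≤ (1 + t * Mt) - 2 * Real.sqrt t * Sv := by
    intro t ht0 ht1
    set cT := fun j => t * c' j with hcTdef
    have hmem : (cT, p₀.2) ∈ K := by
      rw [hmemK]
      intro j
      constructor
      · exact mul_nonneg ht0 (hc'0 j)
      · calc t * c' j ≤ (5/4) * 4 := by nlinarith [hc'0 j, hc'le4 j]
          _ = 5 := by norm_num
    have h0 := hgmin_le _ hmem
    have hs1 : ∑ j, cT j = t * Mt := by rw [hcTdef, ← Finset.mul_sum, hMtsum]
    have hs2 : ∀ i, ∑ j, cT j * CfR κ (x i) (p₀.2 j) = t * at_ i := by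
      intro i
      rw [hcTdef, ← hatA i, Finset.mul_sum]
      apply Finset.sum_congr rfl
      intro j _
      ring
    calc gmin ≤ G (cT, p₀.2) := h0
      _ = ∑ i, (m i : ℝ) * (1 + t * Mt - 2 * (Real.sqrt t * Real.sqrt (at_ i))) := by
          rw [hGdef]
          apply Finset.sum_congr rfl
          intro i _
          rw [show (cT, p₀.2).1 = cT from rfl, hs1, hs2 i, Real.sqrt_mul ht0]
      _ = (1 + t * Mt) - 2 * ∑ i, (m i : ℝ) * (Real.sqrt t * Real.sqrt (at_ i)) := by
          have := hexpand (t * Mt) (fun i => Real.sqrt t * Real.sqrt (at_ i))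
          calc ∑ i, (m i : ℝ) * (1 + t * Mt - 2 * (Real.sqrt t * Real.sqrt (at_ i)))
              = ∑ i, (m i : ℝ) * (1 + (t * Mt) - 2 * (Real.sqrt t * Real.sqrt (at_ i))) := rfl
            _ = _ := this
      _ = (1 + t * Mt) - 2 * Real.sqrt t * Sv := by
          have hsum2 : ∑ i, (m i : ℝ) * (Real.sqrt t * Real.sqrt (at_ i))
              = Real.sqrt t * ∑ i, (m i : ℝ) * Real.sqrt (at_ i) := by
            rw [Finset.mul_sum]
            apply Finset.sum_congr rfl
            intro i _
            ring
          rw [hsum2, hSvdef]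
          ring
  -- Step 4: positivity of `at_` where the mass is positive
  have hatpos : ∀ i, m i ≠ 0 → 0 < at_ i := by
    intro i hmi
    rcases (hat0 i).lt_or_eq with h | h
    · exact h
    · exfalso
      have hmr : 0 < (m i : ℝ) := by
        have := pos_iff_ne_zero.mpr hmi
        exact_mod_cast this
      set ε := min 1 ((m i : ℝ)^2) with hεdef
      have hε0 : 0 < ε := lt_min one_pos (by positivity)
      have hε1 : ε ≤ 1 := min_le_left _ _
      have hp := hpert (x i) ε hε0.le hε1
      rw [hgmindef] at hp
      have hterm : ∀ k : Fin n, (m k : ℝ) * Real.sqrt (at_ k)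
          ≤ (m k : ℝ) * Real.sqrt (ε * CfR κ (x k) (x i) + at_ k) := by
        intro k
        apply mul_le_mul_of_nonneg_left _ (m k).coe_nonneg
        apply Real.sqrt_le_sqrt
        nlinarith [CfR_nonneg κ (x k) (x i), hε0.le]
      have hsingle : (m i : ℝ) * Real.sqrt (ε * CfR κ (x i) (x i) + at_ i)
          = (m i : ℝ) * Real.sqrt ε := by
        rw [CfR_self, mul_one, ← h, add_zero]
      have e1 : ∑ k, (m k : ℝ) * Real.sqrt (ε * CfR κ (x k) (x i) + at_ k)
          = (m i : ℝ) * Real.sqrt ε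
            + ∑ k ∈ Finset.univ.erase i,
                (m k : ℝ) * Real.sqrt (ε * CfR κ (x k) (x i) + at_ k) := by
        rw [← Finset.add_sum_erase _ _ (Finset.mem_univ i), hsingle]
      have e2 : Sv = ∑ k ∈ Finset.univ.erase i, (m k : ℝ) * Real.sqrt (at_ k) := by
        rw [hSvdef, ← Finset.add_sum_erase _ _ (Finset.mem_univ i), ← h, Real.sqrt_zero,
          mul_zero, zero_add]
      have e3 : ∑ k ∈ Finset.univ.erase i, (m k : ℝ) * Real.sqrt (at_ k)
          ≤ ∑ k ∈ Finset.univ.erase i,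
              (m k : ℝ) * Real.sqrt (ε * CfR κ (x k) (x i) + at_ k) :=
        Finset.sum_le_sum fun k _ => hterm k
      have hkey : 2 * ((m i : ℝ) * Real.sqrt ε) ≤ ε := by
        rw [e1] at hp
        rw [e2] at hp
        linarith
      have hs1 : Real.sqrt ε ≤ (m i : ℝ) := by
        calc Real.sqrt ε ≤ Real.sqrt ((m i : ℝ)^2) := Real.sqrt_le_sqrt (min_le_right _ _)
          _ = (m i : ℝ) := Real.sqrt_sq hmr.le
      have hs2 : Real.sqrt ε * Real.sqrt ε = ε := Real.mul_self_sqrt hε0.le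
      have hs3 : 0 < Real.sqrt ε := Real.sqrt_pos.mpr hε0
      nlinarith
  -- Step 5: the dual certificate
  have hcert : ∀ y : X, ∑ i, (m i : ℝ) * (CfR κ (x i) y / Real.sqrt (at_ i)) ≤ 1 := by
    intro y
    set F : ℝ → ℝ := fun ε => ∑ i, (m i : ℝ) *
      (2 * CfR κ (x i) y / (Real.sqrt (ε * CfR κ (x i) y + at_ i) + Real.sqrt (at_ i)))
      with hFdef
    have hFle : ∀ ε ∈ Set.Ioc (0:ℝ) 1, F ε ≤ 1 := by
      intro ε hε
      obtain ⟨hε0, hε1⟩ := hε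
      have hp := hpert y ε hε0.le hε1
      rw [hgmindef] at hp
      have h2 : 2 * (∑ i, (m i : ℝ) * Real.sqrt (ε * CfR κ (x i) y + at_ i) - Sv) ≤ ε := by
        linarith
      have h4 : ∀ i : Fin n, Real.sqrt (ε * CfR κ (x i) y + at_ i) - Real.sqrt (at_ i)
          = ε * (CfR κ (x i) y
            / (Real.sqrt (ε * CfR κ (x i) y + at_ i) + Real.sqrt (at_ i))) := by
        intro i
        have := sqrt_diff_eq (at_ i) (ε * CfR κ (x i) y) (hat0 i)
          (mul_nonneg hε0.le (CfR_nonneg _ _ _))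
        rw [add_comm (at_ i)] at this
        rw [show Real.sqrt (ε * CfR κ (x i) y + at_ i) + Real.sqrt (at_ i)
            = Real.sqrt (ε * CfR κ (x i) y + at_ i) + Real.sqrt (at_ i) from rfl]
        rw [mul_comm ε (CfR κ (x i) y)] at this ⊢
        rw [mul_div_assoc] at this
        rw [this]
        ring
      have h5 : ε * F ε ≤ ε * 1 := by
        have e6 : ε * F ε = 2 * (∑ i, (m i : ℝ) * Real.sqrt (ε * CfR κ (x i) y + at_ i) - Sv) := by
          rw [hSvdef, ← Finset.sum_sub_distrib, hFdef, Finset.mul_sum, Finset.mul_sum]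
          apply Finset.sum_congr rfl
          intro i _
          have := h4 i
          calc ε * ((m i : ℝ) * (2 * CfR κ (x i) y
                / (Real.sqrt (ε * CfR κ (x i) y + at_ i) + Real.sqrt (at_ i))))
              = 2 * ((m i : ℝ) * (ε * (CfR κ (x i) y
                / (Real.sqrt (ε * CfR κ (x i) y + at_ i) + Real.sqrt (at_ i))))) := by ring
            _ = 2 * ((m i : ℝ) * (Real.sqrt (ε * CfR κ (x i) y + at_ i) - Real.sqrt (at_ i))) := by
                rw [← h4 i]
            _ = 2 * ((m i : ℝ) * Real.sqrt (ε * CfR κ (x i) y + at_ i)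
                - (m i : ℝ) * Real.sqrt (at_ i)) := by ring
        rw [e6, mul_one]
        linarith
      exact le_of_mul_le_mul_left h5 hε0
    have hFlim : Filter.Tendsto F (𝓝[>] (0:ℝ))
        (𝓝 (∑ i, (m i : ℝ) * (CfR κ (x i) y / Real.sqrt (at_ i)))) := by
      rw [hFdef]
      apply tendsto_finset_sum
      intro i _
      rcases eq_or_ne (m i) 0 with hmi | hmi
      · simp only [hmi, NNReal.coe_zero, zero_mul]
        exact tendsto_const_nhds
      · have hai : 0 < at_ i := hatpos i hmi
        have hd : Filter.Tendsto
            (fun ε : ℝ => Real.sqrt (ε * CfR κ (x i) y + at_ i) + Real.sqrt (at_ i))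
            (𝓝[>] (0:ℝ)) (𝓝 (2 * Real.sqrt (at_ i))) := by
          have hcont : Continuous fun ε : ℝ =>
              Real.sqrt (ε * CfR κ (x i) y + at_ i) + Real.sqrt (at_ i) :=
            (Real.continuous_sqrt.comp
              ((continuous_id.mul continuous_const).add continuous_const)).add continuous_const
          have h8 := hcont.tendsto 0
          simp only [zero_mul, zero_add] at h8
          rw [show Real.sqrt (at_ i) + Real.sqrt (at_ i) = 2 * Real.sqrt (at_ i) from
            (two_mul _).symm] at h8
          exact h8.mono_left nhdsWithin_le_nhds
        have hdne : (2 : ℝ) * Real.sqrt (at_ i) ≠ 0 := by positivity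
        have h9 := (Filter.Tendsto.div
          (tendsto_const_nhds (x := (2 * CfR κ (x i) y : ℝ))) hd hdne).const_mul ((m i : ℝ))
        have h7 : (m i : ℝ) * (2 * CfR κ (x i) y / (2 * Real.sqrt (at_ i)))
            = (m i : ℝ) * (CfR κ (x i) y / Real.sqrt (at_ i)) := by
          rw [mul_div_mul_left _ _ (two_ne_zero)]
        rw [h7] at h9
        exact h9
    exact le_of_tendsto hFlim
      (Filter.eventually_of_mem (Ioc_mem_nhdsGT_of_mem ⟨le_refl (0:ℝ), one_pos⟩) hFle)
  -- Step 6: Mt = Sv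
  have hMS : Mt = Sv := by
    have hsub : ∀ t : ℝ, 0 ≤ t → t ≤ 5/4 →
        2 * (Real.sqrt t - 1) * Sv ≤ (t - 1) * Mt := by
      intro t h1 h2
      have h3 := hscale t h1 h2
      rw [hgmindef] at h3
      nlinarith
    have hSv0 : 0 ≤ Sv := Finset.sum_nonneg fun i _ =>
      mul_nonneg (m i).coe_nonneg (Real.sqrt_nonneg _)
    have hge : Sv ≤ Mt := by
      have hlim : Filter.Tendsto (fun t : ℝ => 2 * Sv / (Real.sqrt t + 1)) (𝓝[>] (1:ℝ))
          (𝓝 Sv) := by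
        have hcont : Filter.Tendsto (fun t : ℝ => 2 * Sv / (Real.sqrt t + 1)) (𝓝 (1:ℝ))
            (𝓝 (2 * Sv / (Real.sqrt 1 + 1))) :=
          Filter.Tendsto.div (tendsto_const_nhds (x := (2 * Sv : ℝ)))
            ((Real.continuous_sqrt.tendsto 1).add (tendsto_const_nhds (x := (1:ℝ))))
            (by rw [Real.sqrt_one]; norm_num)
        rw [Real.sqrt_one] at hcont
        have heq : 2 * Sv / (1 + 1) = Sv := by ring
        rw [heq] at hcont
        exact hcont.mono_left nhdsWithin_le_nhds
      apply le_of_tendsto hlim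
      apply Filter.eventually_of_mem
        (Ioc_mem_nhdsGT_of_mem (⟨le_refl (1:ℝ), by norm_num⟩ : (1:ℝ) ∈ Set.Ico 1 (5/4)))
      intro t ht
      obtain ⟨ht1, ht2⟩ := ht
      have h0t : (0:ℝ) ≤ t := by linarith
      have h3 := hsub t h0t ht2
      have hsq : (Real.sqrt t - 1) * (Real.sqrt t + 1) = t - 1 := by
        linear_combination Real.sq_sqrt h0t
      have hstpos : 0 < Real.sqrt t + 1 := by positivity
      rw [div_le_iff₀ hstpos]
      have htpos : 0 < Real.sqrt t - 1 := by
        have h5 : (1:ℝ) < Real.sqrt t := by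
          have h6 := Real.sqrt_lt_sqrt (by norm_num : (0:ℝ) ≤ 1) ht1
          rwa [Real.sqrt_one] at h6
        linarith
      have e7 : (t - 1) * Mt = (Real.sqrt t - 1) * ((Real.sqrt t + 1) * Mt) := by
        rw [← hsq]; ring
      rw [e7] at h3
      have e8 : 2 * (Real.sqrt t - 1) * Sv = (Real.sqrt t - 1) * (2 * Sv) := by ring
      rw [e8] at h3
      have h9 := le_of_mul_le_mul_left h3 htpos
      linarith
    have hle : Mt ≤ Sv := by
      have hlim : Filter.Tendsto (fun t : ℝ => 2 * Sv / (Real.sqrt t + 1)) (𝓝[<] (1:ℝ))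
          (𝓝 Sv) := by
        have hcont : Filter.Tendsto (fun t : ℝ => 2 * Sv / (Real.sqrt t + 1)) (𝓝 (1:ℝ))
            (𝓝 (2 * Sv / (Real.sqrt 1 + 1))) :=
          Filter.Tendsto.div (tendsto_const_nhds (x := (2 * Sv : ℝ)))
            ((Real.continuous_sqrt.tendsto 1).add (tendsto_const_nhds (x := (1:ℝ))))
            (by rw [Real.sqrt_one]; norm_num)
        rw [Real.sqrt_one] at hcont
        have heq : 2 * Sv / (1 + 1) = Sv := by ring
        rw [heq] at hcont
        exact hcont.mono_left nhdsWithin_le_nhds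
      apply ge_of_tendsto hlim
      apply Filter.eventually_of_mem
        (Ico_mem_nhdsLT_of_mem (⟨by norm_num, le_refl (1:ℝ)⟩ : (1:ℝ) ∈ Set.Ioc (1/2) 1))
      intro t ht
      obtain ⟨ht1, ht2⟩ := ht
      have h0t : (0:ℝ) ≤ t := by linarith
      have h3 := hsub t h0t (by linarith)
      have hsq : (Real.sqrt t - 1) * (Real.sqrt t + 1) = t - 1 := by
        linear_combination Real.sq_sqrt h0t
      have hstpos : 0 < Real.sqrt t + 1 := by positivity
      rw [le_div_iff₀ hstpos]
      have htneg : 0 < 1 - Real.sqrt t := by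
        have h5 : Real.sqrt t < 1 := by
          have h6 := Real.sqrt_lt_sqrt h0t ht2
          rwa [Real.sqrt_one] at h6
        linarith
      have e7 : (t - 1) * Mt = -((1 - Real.sqrt t) * ((Real.sqrt t + 1) * Mt)) := by
        rw [show t - 1 = -((1 - Real.sqrt t) * (Real.sqrt t + 1)) by linear_combination - hsq]
        ring
      rw [e7] at h3
      have e8 : 2 * (Real.sqrt t - 1) * Sv = -((1 - Real.sqrt t) * (2 * Sv)) := by ring
      rw [e8] at h3
      have h3' : (1 - Real.sqrt t) * ((Real.sqrt t + 1) * Mt) ≤ (1 - Real.sqrt t) * (2 * Sv) := by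
        linarith
      have h9 := le_of_mul_le_mul_left h3' htneg
      linarith
    linarith
  -- Step 7: conclusion
  refine ⟨ct, yt, hct0, ?_⟩
  intro ν hν
  haveI := hν
  have hval : ∑ i, (m i : ℝ) * hkVal κ (x i) (aMeas ct yt) = 1 - Sv := by
    have h1 : ∀ i : Fin n, hkVal κ (x i) (aMeas ct yt) = 1 + Mt - 2 * Real.sqrt (at_ i) := by
      intro i
      rw [hkVal_aMeas κ (x i) ct hct0 yt]
    have h2 : ∑ i, (m i : ℝ) * hkVal κ (x i) (aMeas ct yt)
        = ∑ i, (m i : ℝ) * (1 + Mt - 2 * Real.sqrt (at_ i)) :=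
      Finset.sum_congr rfl fun i _ => by rw [h1 i]
    rw [h2, hexpand Mt (fun i => Real.sqrt (at_ i)), ← hSvdef, hMS]
    ring
  set V := (ν Set.univ).toReal with hVdef
  set aν : Fin n → ℝ := fun i => (mA κ (x i) ν).toReal with haνdef
  have haν0 : ∀ i, 0 ≤ aν i := fun i => ENNReal.toReal_nonneg
  have hkv : ∀ i, hkVal κ (x i) ν = 1 + V - 2 * Real.sqrt (aν i) := fun i => rfl
  have hkey : ∑ i, (m i : ℝ) * (aν i / Real.sqrt (at_ i)) ≤ V := by
    have hptw : ∀ z : X,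
        ∑ i, ENNReal.ofReal ((m i : ℝ) / Real.sqrt (at_ i) * CfR κ (x i) z) ≤ 1 := by
      intro z
      rw [← ENNReal.ofReal_sum_of_nonneg (fun i _ =>
        mul_nonneg (div_nonneg (m i).coe_nonneg (Real.sqrt_nonneg _)) (CfR_nonneg _ _ _)),
        ← ENNReal.ofReal_one]
      apply ENNReal.ofReal_le_ofReal
      have h10 := hcert z
      calc ∑ i, (m i : ℝ) / Real.sqrt (at_ i) * CfR κ (x i) z
          = ∑ i, (m i : ℝ) * (CfR κ (x i) z / Real.sqrt (at_ i)) := by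
            apply Finset.sum_congr rfl
            intro i _
            rw [div_mul_eq_mul_div, mul_div_assoc]
        _ ≤ 1 := h10
    have hE : ∑ i, ENNReal.ofReal ((m i : ℝ) / Real.sqrt (at_ i)) * mA κ (x i) ν
        ≤ ν Set.univ := by
      have e1 : ∀ i : Fin n, ENNReal.ofReal ((m i : ℝ) / Real.sqrt (at_ i)) * mA κ (x i) ν
          = ∫⁻ z, ENNReal.ofReal ((m i : ℝ) / Real.sqrt (at_ i) * CfR κ (x i) z) ∂ν := by
        intro i
        rw [mA, ← lintegral_const_mul _ (measurable_CfR κ (x i)).ennreal_ofReal]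
        apply lintegral_congr
        intro z
        rw [← ENNReal.ofReal_mul (div_nonneg (m i).coe_nonneg (Real.sqrt_nonneg _))]
      rw [Finset.sum_congr rfl fun i _ => e1 i,
        ← lintegral_finset_sum _ (fun i _ =>
          ((measurable_CfR κ (x i)).const_mul _).ennreal_ofReal)]
      calc ∫⁻ z, ∑ i, ENNReal.ofReal ((m i : ℝ) / Real.sqrt (at_ i) * CfR κ (x i) z) ∂ν
          ≤ ∫⁻ _, 1 ∂ν := lintegral_mono fun z => hptw z
        _ = ν Set.univ := lintegral_one
    have e2 : ENNReal.ofReal (∑ i, (m i : ℝ) * (aν i / Real.sqrt (at_ i))) ≤ ν Set.univ := by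
      rw [ENNReal.ofReal_sum_of_nonneg (fun i _ =>
        mul_nonneg (m i).coe_nonneg (div_nonneg (haν0 i) (Real.sqrt_nonneg _)))]
      refine le_trans (le_of_eq ?_) hE
      apply Finset.sum_congr rfl
      intro i _
      rw [show (m i : ℝ) * (aν i / Real.sqrt (at_ i))
          = ((m i : ℝ) / Real.sqrt (at_ i)) * aν i by ring,
        ENNReal.ofReal_mul (div_nonneg (m i).coe_nonneg (Real.sqrt_nonneg _))]
      congr 1
      rw [haνdef]
      exact ENNReal.ofReal_toReal (mA_ne_top κ (x i) ν)
    calc ∑ i, (m i : ℝ) * (aν i / Real.sqrt (at_ i))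
        = (ENNReal.ofReal (∑ i, (m i : ℝ) * (aν i / Real.sqrt (at_ i)))).toReal :=
          (ENNReal.toReal_ofReal (Finset.sum_nonneg fun i _ =>
            mul_nonneg (m i).coe_nonneg (div_nonneg (haν0 i) (Real.sqrt_nonneg _)))).symm
      _ ≤ (ν Set.univ).toReal := ENNReal.toReal_mono (measure_ne_top ν _) e2
      _ = V := rfl
  have hamgm : 2 * ∑ i, (m i : ℝ) * Real.sqrt (aν i)
      ≤ ∑ i, (m i : ℝ) * (aν i / Real.sqrt (at_ i)) + Sv := by
    rw [hSvdef, Finset.mul_sum, ← Finset.sum_add_distrib]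
    apply Finset.sum_le_sum
    intro i _
    rcases eq_or_ne (m i) 0 with hmi | hmi
    · simp [hmi]
    · have hai := hatpos i hmi
      have h11 := amgm_sqrt (aν i) (at_ i) (haν0 i) hai
      have hmn := (m i).coe_nonneg
      calc 2 * ((m i : ℝ) * Real.sqrt (aν i)) = (m i : ℝ) * (2 * Real.sqrt (aν i)) := by ring
        _ ≤ (m i : ℝ) * (aν i / Real.sqrt (at_ i) + Real.sqrt (at_ i)) :=
            mul_le_mul_of_nonneg_left h11 hmn
        _ = (m i : ℝ) * (aν i / Real.sqrt (at_ i)) + (m i : ℝ) * Real.sqrt (at_ i) := by ring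
  rw [hval]
  calc 1 - Sv ≤ (1 + V) - 2 * ∑ i, (m i : ℝ) * Real.sqrt (aν i) := by linarith
    _ = ∑ i, (m i : ℝ) * hkVal κ (x i) ν := by
        rw [Finset.sum_congr rfl fun i _ => (by rw [hkv i] : (m i : ℝ) * hkVal κ (x i) ν
          = (m i : ℝ) * (1 + V - 2 * Real.sqrt (aν i))),
          hexpand V (fun i => Real.sqrt (aν i))]

end Main

end Cf
end HKAux

/-- Discrete barycenters exist for a finite number of Dirac input measures. -/
theorem hk_dirac_discrete_barycenter {d : ℕ} (Ω : Set (Ed d)) (hΩ₁ : IsCompact Ω)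
    (hΩ₂ : Convex ℝ Ω) (hΩ₃ : (interior Ω).Nonempty)
    (n : ℕ) (m : Fin n → ℝ≥0) (hm : ∑ i, m i = 1) (x : Fin n → ↥Ω)
    (ρ : Measure ↥Ω) (hρ : ρ = ∑ i, (m i : ℝ≥0∞) • Measure.dirac (x i))
    (κ : ℝ) (hκ : 0 < κ) :
    ∃ k : ℕ, 0 < k ∧ k ≤ n ∧
      ∃ (mt : Fin k → ℝ≥0) (xt : Fin k → ↥Ω),
        PrimalMin ρ κ (∑ i, (mt i : ℝ≥0∞) • Measure.dirac (xt i)) := by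
  have hn : 0 < n := by
    rcases Nat.eq_zero_or_pos n with h | h
    · subst h
      simp at hm
    · exact h
  haveI : CompactSpace ↥Ω := isCompact_iff_compactSpace.mp hΩ₁
  haveI : Nonempty ↥Ω := ⟨⟨hΩ₃.choose, interior_subset hΩ₃.choose_spec⟩⟩
  have hmr : ∑ i, (m i : ℝ) = 1 := by exact_mod_cast hm
  obtain ⟨ct, yt, hct0, hmin⟩ := exists_discrete_min κ hκ m hmr x
  refine ⟨n, hn, le_refl n, fun i => (ct i).toNNReal, yt, ?_⟩
  have hνeq : (∑ i, (((ct i).toNNReal : ℝ≥0∞)) • Measure.dirac (yt i)) = aMeas ct yt := by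
    rw [aMeas]
    apply Finset.sum_congr rfl
    intro i _
    rfl
  constructor
  · rw [hνeq]; infer_instance
  · intro ν' hν'
    haveI := hν'
    rw [hρ, hνeq, JDirac_formula κ hκ m x _, JDirac_formula κ hκ m x ν']
    exact ENNReal.ofReal_le_ofReal (hmin ν' hν')

end
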